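/- There exists a universal constant C > 0 such that for all integers n, W ≥ 1 and every real λ ≥ 0, P_{∞,W,n}(max C_π(0) > λ + 2W) ≤ C·W²·P_{∞,W,n}(max C_π(0) ∈ (λ, λ + 2W]). -/

import Mathlib

open Finset

/-- The integer interval `[-n, n]`, as a type. -/
abbrev Box (n : ℕ) : Type := {x : ℤ // x ∈ Finset.Icc (-(n : ℤ)) (n : ℤ)}

/-- The point `0 ∈ [-n, n]`. -/
def boxZero (n : ℕ) : Box n :=
  ⟨0, by simp⟩

/-- The maximum of the cycle of `j` under `π`, i.e. `max C_π(j)` where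
`C_π(j) = {π^k(j) : k ∈ ℤ}`. -/
noncomputable def maxCycle {n : ℕ} (π : Equiv.Perm (Box n)) (j : Box n) : ℤ :=
  sSup {x : ℤ | ∃ k : ℤ, (((π ^ k) j : Box n) : ℤ) = x}

/-- The minimum of the cycle of `j` under `π`. -/
noncomputable def minCycle {n : ℕ} (π : Equiv.Perm (Box n)) (j : Box n) : ℤ :=
  sInf {x : ℤ | ∃ k : ℤ, (((π ^ k) j : Box n) : ℤ) = x}

/-- The diameter of the cycle of `j` under `π`. -/
noncomputable def diamCycle {n : ℕ} (π : Equiv.Perm (Box n)) (j : Box n) : ℤ :=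
  maxCycle π j - minCycle π j

/-- The Boltzmann–Gibbs weight `exp(-W^{-p} Σ_i |π(i) - i|^p)`. -/
noncomputable def gibbsWeight (p : ℝ) (W n : ℕ) (π : Equiv.Perm (Box n)) : ℝ :=
  Real.exp (-(W : ℝ) ^ (-p) * ∑ i : Box n, |((π i : ℤ) : ℝ) - ((i : ℤ) : ℝ)| ^ p)

open scoped Classical in
/-- The probability of the event `E` under the Gibbs measure `P_{p,W,n}`. -/
noncomputable def gibbsProb (p : ℝ) (W n : ℕ) (E : Set (Equiv.Perm (Box n))) : ℝ :=
  (∑ π : Equiv.Perm (Box n), if π ∈ E then gibbsWeight p W n π else 0) /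
    ∑ π : Equiv.Perm (Box n), gibbsWeight p W n π

/-- The probability of a single permutation under the Gibbs measure `P_{p,W,n}`. -/
noncomputable def gibbsP (p : ℝ) (W n : ℕ) (π : Equiv.Perm (Box n)) : ℝ :=
  gibbsWeight p W n π / ∑ σ : Equiv.Perm (Box n), gibbsWeight p W n σ

/-- The set `S_W` of permutations displacing each point by at most `W`. -/
def SW (n W : ℕ) : Set (Equiv.Perm (Box n)) :=
  {π | ∀ i : Box n, |(π i : ℤ) - (i : ℤ)| ≤ (W : ℤ)}

open scoped Classical in
/-- The probability of the event `E` under the uniform measure `P_{∞,W,n}` on `S_W`. -/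
noncomputable def unifProb (W n : ℕ) (E : Set (Equiv.Perm (Box n))) : ℝ :=
  ((Finset.univ.filter fun π : Equiv.Perm (Box n) => π ∈ SW n W ∧ π ∈ E).card : ℝ) /
    ((Finset.univ.filter fun π : Equiv.Perm (Box n) => π ∈ SW n W).card : ℝ)

/-- `Period(π, j)`: the least positive `m` with `π^m(j) = j`. -/
noncomputable def permPeriod {n : ℕ} (π : Equiv.Perm (Box n)) (j : Box n) : ℕ :=
  sInf {m : ℕ | 0 < m ∧ (π ^ m) j = j}

/-- `i_first(π)` for the threshold `t`. -/
noncomputable def iFirst {n : ℕ} (t : ℝ) (π : Equiv.Perm (Box n)) : ℕ :=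
  sInf {j : ℕ | ((((π ^ j) (boxZero n) : Box n) : ℤ) : ℝ) ≤ t ∧
    t < ((((π ^ (j + 1)) (boxZero n) : Box n) : ℤ) : ℝ)}

/-- `i_last(π)` for the threshold `t`. -/
noncomputable def iLast {n : ℕ} (t : ℝ) (π : Equiv.Perm (Box n)) : ℕ :=
  sSup {j : ℕ | j < permPeriod π (boxZero n) ∧
    ((((π ^ (j + 1)) (boxZero n) : Box n) : ℤ) : ℝ) ≤ t ∧
    t < ((((π ^ j) (boxZero n) : Box n) : ℤ) : ℝ)}

/-- The uncrossing map `Φ_t(π) = π ∘ (π^{i_first+1}(0)  π^{i_last+1}(0))`. -/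
noncomputable def Phi {n : ℕ} (t : ℝ) (π : Equiv.Perm (Box n)) : Equiv.Perm (Box n) :=
  π * Equiv.swap ((π ^ (iFirst t π + 1)) (boxZero n)) ((π ^ (iLast t π + 1)) (boxZero n))


/-! ### Auxiliary machinery for the proof -/

section AuxProof

open scoped Classical

variable {n : ℕ}

/-- The value of the `k`-th iterate (ℕ powers) of `π` at `0`. -/
def vv {n : ℕ} (π : Equiv.Perm (Box n)) (k : ℕ) : ℤ :=
  (((π ^ k) (boxZero n) : Box n) : ℤ)

lemma vv_zero (π : Equiv.Perm (Box n)) : vv π 0 = 0 := by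
  simp [vv, boxZero]

lemma vv_orderOf (π : Equiv.Perm (Box n)) : vv π (orderOf π) = 0 := by
  simp [vv, pow_orderOf_eq_one, boxZero]

lemma vv_succ (π : Equiv.Perm (Box n)) (k : ℕ) :
    (π ^ (k + 1)) (boxZero n) = π ((π ^ k) (boxZero n)) := by
  rw [pow_succ']; rfl

lemma vv_step {W : ℕ} (π : Equiv.Perm (Box n)) (hπ : π ∈ SW n W) (k : ℕ) :
    |vv π (k + 1) - vv π k| ≤ (W : ℤ) := by
  have := hπ ((π ^ k) (boxZero n))
  simpa [vv, vv_succ] using this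

lemma orbitSet_eq (π : Equiv.Perm (Box n)) (j : Box n) :
    {x : ℤ | ∃ k : ℤ, (((π ^ k) j : Box n) : ℤ) = x}
      = {x : ℤ | ∃ m : ℕ, (((π ^ m) j : Box n) : ℤ) = x} := by
  ext x
  constructor
  · rintro ⟨k, rfl⟩
    refine ⟨(k % (orderOf π : ℤ)).toNat, ?_⟩
    rw [← zpow_natCast, Int.toNat_of_nonneg
        (Int.emod_nonneg k (by exact_mod_cast (orderOf_pos π).ne')),
      zpow_mod_orderOf]
  · rintro ⟨m, rfl⟩
    exact ⟨(m : ℤ), by rw [zpow_natCast]⟩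

lemma orbit_finite (π : Equiv.Perm (Box n)) (j : Box n) :
    {x : ℤ | ∃ k : ℤ, (((π ^ k) j : Box n) : ℤ) = x}.Finite := by
  refine Set.Finite.subset (Set.finite_range (fun b : Box n => (b : ℤ))) ?_
  rintro x ⟨k, rfl⟩
  exact ⟨_, rfl⟩

lemma orbit_nonempty (π : Equiv.Perm (Box n)) (j : Box n) :
    {x : ℤ | ∃ k : ℤ, (((π ^ k) j : Box n) : ℤ) = x}.Nonempty :=
  ⟨(((π ^ (0 : ℤ)) j : Box n) : ℤ), 0, rfl⟩

lemma maxCycle_mem (π : Equiv.Perm (Box n)) :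
    ∃ m : ℕ, vv π m = maxCycle π (boxZero n) := by
  have h : maxCycle π (boxZero n) ∈
      {x : ℤ | ∃ m : ℕ, (((π ^ m) (boxZero n) : Box n) : ℤ) = x} := by
    rw [← orbitSet_eq]
    exact (orbit_nonempty π (boxZero n)).csSup_mem (orbit_finite π (boxZero n))
  obtain ⟨m, hm⟩ := h
  exact ⟨m, hm⟩

lemma le_maxCycle (π : Equiv.Perm (Box n)) (m : ℕ) :
    vv π m ≤ maxCycle π (boxZero n) := by
  refine le_csSup (orbit_finite π (boxZero n)).bddAbove ⟨(m : ℤ), ?_⟩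
  rw [zpow_natCast]; rfl

/-- First up-crossing index of level `t` by the forward orbit of `0`. -/
noncomputable def myI (t : ℝ) (π : Equiv.Perm (Box n)) : ℕ :=
  sInf {j : ℕ | ((vv π j : ℤ) : ℝ) ≤ t ∧ t < ((vv π (j + 1) : ℤ) : ℝ)}

/-- Last down-crossing index of level `t` by the forward orbit of `0`. -/
noncomputable def myL (t : ℝ) (π : Equiv.Perm (Box n)) : ℕ :=
  sSup {j : ℕ | j < orderOf π ∧ t < ((vv π j : ℤ) : ℝ) ∧ ((vv π (j + 1) : ℤ) : ℝ) ≤ t}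

/-- The uncrossing map used in the proof. -/
noncomputable def myF (t : ℝ) (π : Equiv.Perm (Box n)) : Equiv.Perm (Box n) :=
  π * Equiv.swap ((π ^ myI t π) (boxZero n)) ((π ^ myL t π) (boxZero n))

lemma main_step (n W : ℕ) (hW : 1 ≤ W) (lam : ℝ) (hlam : 0 ≤ lam)
    (π : Equiv.Perm (Box n)) (hπ : π ∈ SW n W)
    (hmax : lam + 2 * W < ((maxCycle π (boxZero n) : ℤ) : ℝ)) :
    myF (lam + W) π ∈ SW n W ∧
    lam < ((maxCycle (myF (lam + W) π) (boxZero n) : ℤ) : ℝ) ∧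
    ((maxCycle (myF (lam + W) π) (boxZero n) : ℤ) : ℝ) ≤ lam + 2 * W ∧
    π = myF (lam + W) π *
        Equiv.swap ((π ^ myI (lam + W) π) (boxZero n)) ((π ^ myL (lam + W) π) (boxZero n)) ∧
    (lam + W) - W < ((vv π (myI (lam + W) π) : ℤ) : ℝ) ∧
    ((vv π (myI (lam + W) π) : ℤ) : ℝ) ≤ lam + W ∧
    lam + W < ((vv π (myL (lam + W) π) : ℤ) : ℝ) ∧
    ((vv π (myL (lam + W) π) : ℤ) : ℝ) ≤ (lam + W) + W := by
  classical
  set z := boxZero n with hz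
  set t : ℝ := lam + W with ht
  set N := orderOf π with hN
  have hNpos : 0 < N := orderOf_pos π
  have hW0 : (0 : ℝ) ≤ W := by positivity
  have hW1 : (1 : ℝ) ≤ W := by exact_mod_cast hW
  have ht0 : 0 ≤ t := by rw [ht]; linarith
  have hup : ∀ k, ((vv π (k + 1) : ℤ) : ℝ) ≤ (vv π k : ℤ) + W := by
    intro k
    have := vv_step π hπ k
    have : ((|vv π (k + 1) - vv π k| : ℤ) : ℝ) ≤ W := by exact_mod_cast this
    rw [Int.cast_abs] at this
    have := (abs_le.mp this).2
    push_cast at this ⊢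
    linarith
  have hdown : ∀ k, ((vv π k : ℤ) : ℝ) - W ≤ (vv π (k + 1) : ℤ) := by
    intro k
    have := vv_step π hπ k
    have : ((|vv π (k + 1) - vv π k| : ℤ) : ℝ) ≤ W := by exact_mod_cast this
    rw [Int.cast_abs] at this
    have := (abs_le.mp this).1
    push_cast at this ⊢
    linarith
  -- existence of a value above t at index < N
  have hm' : ∃ m : ℕ, m < N ∧ t < ((vv π m : ℤ) : ℝ) := by
    obtain ⟨m, hm⟩ := maxCycle_mem π
    refine ⟨m % N, Nat.mod_lt _ hNpos, ?_⟩
    have hvm : vv π (m % N) = vv π m := by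
      unfold vv
      rw [hN, pow_mod_orderOf]
    rw [hvm, hm]
    have : t ≤ lam + 2 * W := by rw [ht]; linarith
    linarith
  -- the first-crossing set is nonempty, with all witnesses giving i < N
  have hS1ne : ∃ j : ℕ, j < N ∧ ((vv π j : ℤ) : ℝ) ≤ t ∧ t < ((vv π (j + 1) : ℤ) : ℝ) := by
    obtain ⟨m, hmN, hmt⟩ := hm'
    have hex : ∃ k : ℕ, t < ((vv π k : ℤ) : ℝ) := ⟨m, hmt⟩
    have hk0 : Nat.find hex ≠ 0 := by
      intro h
      have hsp := Nat.find_spec hex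
      rw [h, vv_zero] at hsp
      simp at hsp
      linarith
    set j := Nat.find hex - 1 with hj
    have hjj : j + 1 = Nat.find hex := by omega
    have hspec : t < ((vv π (j + 1) : ℤ) : ℝ) := by rw [hjj]; exact Nat.find_spec hex
    have hjle : ¬ t < ((vv π j : ℤ) : ℝ) := Nat.find_min hex (by omega)
    have hkm : j + 1 ≤ m := by rw [hjj]; exact Nat.find_min' hex hmt
    exact ⟨j, by omega, not_lt.mp hjle, hspec⟩
  set i := myI t π with hi_def
  have hi_memmin : ((vv π i : ℤ) : ℝ) ≤ t ∧ t < ((vv π (i + 1) : ℤ) : ℝ) := by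
    obtain ⟨j, _, h1, h2⟩ := hS1ne
    exact Nat.sInf_mem (⟨j, h1, h2⟩ :
      {j : ℕ | ((vv π j : ℤ) : ℝ) ≤ t ∧ t < ((vv π (j + 1) : ℤ) : ℝ)}.Nonempty)
  have hi_min : ∀ k, ((vv π k : ℤ) : ℝ) ≤ t → t < ((vv π (k + 1) : ℤ) : ℝ) → i ≤ k :=
    fun k h1 h2 => Nat.sInf_le ⟨h1, h2⟩
  have hiN : i < N := by
    obtain ⟨j, hj, h1, h2⟩ := hS1ne
    exact lt_of_le_of_lt (hi_min j h1 h2) hj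
  -- all values up to i are ≤ t
  have P1 : ∀ k, k ≤ i → ((vv π k : ℤ) : ℝ) ≤ t := by
    intro k
    induction k with
    | zero => intro _; rw [vv_zero]; simpa using ht0
    | succ k ih =>
      intro hk
      have h1 := ih (Nat.le_of_succ_le hk)
      by_contra h
      push_neg at h
      exact absurd (hi_min k h1 h) (by omega)
  -- the last-crossing set
  set S2 := {j : ℕ | j < N ∧ t < ((vv π j : ℤ) : ℝ) ∧ ((vv π (j + 1) : ℤ) : ℝ) ≤ t} with hS2
  have hS2bdd : BddAbove S2 := ⟨N, fun j hj => le_of_lt hj.1⟩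
  have hS2ne : S2.Nonempty := by
    obtain ⟨m, hmN, hmt⟩ := hm'
    set Q : ℕ → Prop := fun j => j < N ∧ t < ((vv π j : ℤ) : ℝ) with hQ
    set js := Nat.findGreatest Q N with hjs
    have hQjs : Q js := Nat.findGreatest_spec (le_of_lt hmN) ⟨hmN, hmt⟩
    refine ⟨js, hQjs.1, hQjs.2, ?_⟩
    by_contra h
    push_neg at h
    by_cases h2 : js + 1 < N
    · exact Nat.findGreatest_is_greatest (Nat.lt_succ_self js) (by omega) ⟨h2, h⟩
    · have : js + 1 = N := by omega
      rw [this, vv_orderOf] at h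
      simp at h
      linarith
  set l := myL t π with hl_def
  have hl_mem : l ∈ S2 := Nat.sSup_mem hS2ne hS2bdd
  have hl_max : ∀ j, j ∈ S2 → j ≤ l := fun j hj => le_csSup hS2bdd hj
  have hlN : l < N := hl_mem.1
  have hvlb : t < ((vv π l : ℤ) : ℝ) := hl_mem.2.1
  have hvl1 : ((vv π (l + 1) : ℤ) : ℝ) ≤ t := hl_mem.2.2
  -- all values strictly after l (up to N) are ≤ t
  have P2 : ∀ k, l < k → k ≤ N → ((vv π k : ℤ) : ℝ) ≤ t := by
    have key : ∀ d k, l < k → k + d = N → ((vv π k : ℤ) : ℝ) ≤ t := by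
      intro d
      induction d with
      | zero =>
        intro k _ h2
        have : k = N := by omega
        rw [this, vv_orderOf]
        simpa using ht0
      | succ d ih =>
        intro k h1 h2
        by_contra h
        push_neg at h
        have hk1 : ((vv π (k + 1) : ℤ) : ℝ) ≤ t := ih (k + 1) (by omega) (by omega)
        have : k ∈ S2 := ⟨by omega, h, hk1⟩
        exact absurd (hl_max k this) (by omega)
    intro k h1 h2
    exact key (N - k) k h1 (by omega)
  -- value bounds for a and b
  have hvia : ((vv π i : ℤ) : ℝ) ≤ t := hi_memmin.1
  have hvia' : t - W < ((vv π i : ℤ) : ℝ) := by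
    have := hup i
    have := hi_memmin.2
    linarith [hup i]
  have hvlb' : ((vv π l : ℤ) : ℝ) ≤ t + W := by linarith [hdown l]
  have hvl1' : t - W < ((vv π (l + 1) : ℤ) : ℝ) := by linarith [hdown l]
  have hvi1 : t < ((vv π (i + 1) : ℤ) : ℝ) := hi_memmin.2
  have hvi1' : ((vv π (i + 1) : ℤ) : ℝ) ≤ t + W := by linarith [hup i]
  set a := (π ^ i) z with ha
  set b := (π ^ l) z with hb
  have hab : a ≠ b := by
    intro h
    have : vv π i = vv π l := congrArg (fun x : Box n => (x : ℤ)) h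
    have : ((vv π i : ℤ) : ℝ) = ((vv π l : ℤ) : ℝ) := by exact_mod_cast this
    linarith
  set σ := myF t π with hσ_def
  have hσ_eq : σ = π * Equiv.swap a b := rfl
  have hσa : σ a = (π ^ (l + 1)) z := by
    rw [hσ_eq]
    simp only [Equiv.Perm.mul_apply, Equiv.swap_apply_left]
    rw [hb, ← vv_succ]
  have hσb : σ b = (π ^ (i + 1)) z := by
    rw [hσ_eq]
    simp only [Equiv.Perm.mul_apply, Equiv.swap_apply_right]
    rw [ha, ← vv_succ]
  have hσother : ∀ x, x ≠ a → x ≠ b → σ x = π x := by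
    intro x h1 h2
    rw [hσ_eq]
    simp only [Equiv.Perm.mul_apply, Equiv.swap_apply_of_ne_of_ne h1 h2]
  -- σ is in S_W
  have hσSW : σ ∈ SW n W := by
    intro x
    by_cases hx1 : x = a
    · subst hx1
      rw [hσa]
      have h1 : ((((π ^ (l + 1)) z : Box n) : ℤ) : ℝ) = ((vv π (l + 1) : ℤ) : ℝ) := rfl
      have h2 : ((a : ℤ) : ℝ) = ((vv π i : ℤ) : ℝ) := rfl
      have habs : |(((π ^ (l + 1)) z : Box n) : ℤ) - (a : ℤ)| ≤ (W : ℤ) := by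
        have hr : |((((π ^ (l + 1)) z : Box n) : ℤ) : ℝ) - ((a : ℤ) : ℝ)| ≤ (W : ℝ) := by
          rw [h1, h2, abs_le]
          constructor <;> linarith
        have := hr
        rw [← Int.cast_sub, ← Int.cast_abs] at this
        exact_mod_cast this
      exact habs
    · by_cases hx2 : x = b
      · subst hx2
        rw [hσb]
        have h1 : ((((π ^ (i + 1)) z : Box n) : ℤ) : ℝ) = ((vv π (i + 1) : ℤ) : ℝ) := rfl
        have h2 : ((b : ℤ) : ℝ) = ((vv π l : ℤ) : ℝ) := rfl
        have habs : |(((π ^ (i + 1)) z : Box n) : ℤ) - (b : ℤ)| ≤ (W : ℤ) := by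
          have hr : |((((π ^ (i + 1)) z : Box n) : ℤ) : ℝ) - ((b : ℤ) : ℝ)| ≤ (W : ℝ) := by
            rw [h1, h2, abs_le]
            constructor <;> linarith
          have := hr
          rw [← Int.cast_sub, ← Int.cast_abs] at this
          exact_mod_cast this
        exact habs
      · rw [hσother x hx1 hx2]
        exact hπ x
  -- the "good" index set and orbit containment
  have hGoodVal : ∀ k, (k ≤ i ∨ (l + 1 ≤ k ∧ k ≤ N)) → ((vv π k : ℤ) : ℝ) ≤ t := by
    rintro k (hk | ⟨hk1, hk2⟩)
    · exact P1 k hk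
    · exact P2 k (by omega) hk2
  have horb : ∀ m : ℕ, ∃ k, (k ≤ i ∨ (l + 1 ≤ k ∧ k ≤ N)) ∧ (σ ^ m) z = (π ^ k) z := by
    intro m
    induction m with
    | zero => exact ⟨0, Or.inl (Nat.zero_le i), by simp⟩
    | succ m ih =>
      obtain ⟨k, hGk, hEq⟩ := ih
      -- replace k = N by k = 0
      have hrep : ∃ k', (k' ≤ i ∨ (l + 1 ≤ k' ∧ k' ≤ N)) ∧ k' < N ∧ (σ ^ m) z = (π ^ k') z := by
        by_cases hkN : k = N
        · refine ⟨0, Or.inl (Nat.zero_le i), hNpos, ?_⟩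
          rw [hEq, hkN, hN, pow_orderOf_eq_one, pow_zero]
        · rcases hGk with h | h
          · exact ⟨k, Or.inl h, by omega, hEq⟩
          · exact ⟨k, Or.inr h, by omega, hEq⟩
      obtain ⟨k, hGk, hkN, hEq⟩ := hrep
      have hσm : (σ ^ (m + 1)) z = σ ((π ^ k) z) := by
        rw [pow_succ']
        simp only [Equiv.Perm.mul_apply]
        rw [hEq]
      by_cases hxa : (π ^ k) z = a
      · refine ⟨l + 1, Or.inr ⟨le_refl _, by omega⟩, ?_⟩
        rw [hσm, hxa, hσa]
      · by_cases hxb : (π ^ k) z = b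
        · exfalso
          have : vv π k = vv π l := congrArg (fun x : Box n => (x : ℤ)) hxb
          have h1 : ((vv π k : ℤ) : ℝ) = ((vv π l : ℤ) : ℝ) := by exact_mod_cast this
          have h2 := hGoodVal k hGk
          linarith
        · refine ⟨k + 1, ?_, ?_⟩
          · rcases hGk with h | h
            · left
              rcases Nat.lt_or_ge k i with h' | h'
              · omega
              · exfalso
                have : k = i := le_antisymm h h'
                exact hxa (by rw [this])
            · right; omega
          · rw [hσm, hσother _ hxa hxb, ← vv_succ]
  -- upper bound for maxCycle σ
  have hupper : ((maxCycle σ z : ℤ) : ℝ) ≤ t := by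
    obtain ⟨m, hm⟩ := maxCycle_mem σ
    obtain ⟨k, hGk, hEq⟩ := horb m
    have : vv σ m = vv π k := by
      unfold vv
      rw [← hz, hEq]
    rw [← hm, this]
    exact hGoodVal k hGk
  -- a is on the σ-orbit of 0
  have hfix : ∀ k, k ≤ i → (σ ^ k) z = (π ^ k) z := by
    intro k
    induction k with
    | zero => intro _; simp
    | succ k ih =>
      intro hk
      have hki : k < i := by omega
      have h1 := ih (by omega)
      have hne_b : (π ^ k) z ≠ b := by
        intro h
        have : vv π k = vv π l := congrArg (fun x : Box n => (x : ℤ)) h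
        have h2 : ((vv π k : ℤ) : ℝ) = ((vv π l : ℤ) : ℝ) := by exact_mod_cast this
        have h3 := P1 k (le_of_lt hki)
        linarith
      have hne_a : (π ^ k) z ≠ a := by
        intro h
        have hsucc : (π ^ (k + 1)) z = (π ^ (i + 1)) z := by
          rw [vv_succ, vv_succ, h, ha]
        have hval : ((vv π (k + 1) : ℤ) : ℝ) = ((vv π (i + 1) : ℤ) : ℝ) := by
          unfold vv
          rw [← hz, hsucc]
        have h3 := P1 k (le_of_lt hki)
        have := hi_min k h3 (by rw [hval]; exact hvi1)
        omega
      rw [pow_succ']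
      simp only [Equiv.Perm.mul_apply]
      rw [h1, hσother _ hne_a hne_b, ← vv_succ, vv_succ]
  have hσi : (σ ^ i) z = a := hfix i (le_refl i)
  have hlower : lam < ((maxCycle σ z : ℤ) : ℝ) := by
    have h1 : vv σ i ≤ maxCycle σ z := le_maxCycle σ i
    have h2 : vv σ i = vv π i := by
      unfold vv
      rw [← hz, hσi, ha]
    have h3 : ((vv σ i : ℤ) : ℝ) ≤ ((maxCycle σ z : ℤ) : ℝ) := by exact_mod_cast h1
    rw [h2] at h3
    have : t - W = lam := by rw [ht]; ring
    linarith
  have hinv : π = σ * Equiv.swap a b := by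
    rw [hσ_eq, mul_assoc, Equiv.swap_mul_self, mul_one]
  refine ⟨hσSW, hlower, ?_, hinv, hvia', hvia, hvlb, hvlb'⟩
  have : t ≤ lam + 2 * W := by rw [ht]; linarith
  linarith

end AuxProof

/-- There is a universal constant `C > 0` such that for all integers
`n, W ≥ 1` and every real `λ ≥ 0`,
`P_{∞,W,n}(max C_π(0) > λ + 2W) ≤ C W² P_{∞,W,n}(max C_π(0) ∈ (λ, λ + 2W])`. -/
theorem one_step_max_uniform :
    ∃ C : ℝ, 0 < C ∧ ∀ (n W : ℕ), 1 ≤ n → 1 ≤ W → ∀ lam : ℝ, 0 ≤ lam →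
      unifProb W n {π | lam + 2 * W < ((maxCycle π (boxZero n) : ℤ) : ℝ)} ≤
        C * W ^ 2 *
          unifProb W n {π | lam < ((maxCycle π (boxZero n) : ℤ) : ℝ) ∧
            ((maxCycle π (boxZero n) : ℤ) : ℝ) ≤ lam + 2 * W} := by
  classical
  refine ⟨1, one_pos, fun n W hn hW lam hlam => ?_⟩
  have hD : 0 < (Finset.univ.filter fun π : Equiv.Perm (Box n) => π ∈ SW n W).card := by
    refine Finset.card_pos.mpr ⟨1, ?_⟩
    simp only [Finset.mem_filter, Finset.mem_univ, true_and]
    intro i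
    simp [SW]
  set EA : Set (Equiv.Perm (Box n)) :=
    {π | lam + 2 * W < ((maxCycle π (boxZero n) : ℤ) : ℝ)} with hEA
  set EB : Set (Equiv.Perm (Box n)) :=
    {π | lam < ((maxCycle π (boxZero n) : ℤ) : ℝ) ∧
      ((maxCycle π (boxZero n) : ℤ) : ℝ) ≤ lam + 2 * W} with hEB
  set A : Finset (Equiv.Perm (Box n)) :=
    Finset.univ.filter fun π => π ∈ SW n W ∧ π ∈ EA with hA
  set B : Finset (Equiv.Perm (Box n)) :=
    Finset.univ.filter fun π => π ∈ SW n W ∧ π ∈ EB with hB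
  have hmainA : ∀ π ∈ A, π ∈ SW n W ∧ lam + 2 * W < ((maxCycle π (boxZero n) : ℤ) : ℝ) := by
    intro π hπ
    rw [hA, Finset.mem_filter] at hπ
    exact ⟨hπ.2.1, hπ.2.2⟩
  -- image of the uncrossing map lands in B
  have himage : A.image (myF (lam + W)) ⊆ B := by
    intro σ hσ
    obtain ⟨π, hπA, rfl⟩ := Finset.mem_image.mp hσ
    obtain ⟨hπSW, hπmax⟩ := hmainA π hπA
    obtain ⟨h1, h2, h3, _⟩ := main_step n W hW lam hlam π hπSW hπmax
    rw [hB, Finset.mem_filter]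
    exact ⟨Finset.mem_univ _, h1, h2, h3⟩
  -- fibers of the uncrossing map have size at most W^2
  have hfiber : ∀ σ ∈ A.image (myF (lam + W)),
      (A.filter fun π => myF (lam + W) π = σ).card ≤ W ^ 2 := by
    intro σ _
    have hcard2 : ((Finset.Ioc (⌊lam + (W : ℝ)⌋ - (W : ℤ)) ⌊lam + (W : ℝ)⌋) ×ˢ
        (Finset.Ioc ⌊lam + (W : ℝ)⌋ (⌊lam + (W : ℝ)⌋ + (W : ℤ)))).card = W ^ 2 := by
      rw [Finset.card_product, Int.card_Ioc, Int.card_Ioc]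
      simp [sq]
    rw [← hcard2]
    refine Finset.card_le_card_of_injOn
      (fun π => (vv π (myI (lam + W) π), vv π (myL (lam + W) π))) ?_ ?_
    · intro π hπ
      rw [Finset.mem_coe, Finset.mem_filter] at hπ
      obtain ⟨hπSW, hπmax⟩ := hmainA π hπ.1
      obtain ⟨_, _, _, _, hb1, hb2, hb3, hb4⟩ := main_step n W hW lam hlam π hπSW hπmax
      dsimp only
      rw [Finset.mem_coe, Finset.mem_product, Finset.mem_Ioc, Finset.mem_Ioc]
      refine ⟨⟨?_, ?_⟩, ?_, ?_⟩
      · have h : ⌊lam + (W : ℝ)⌋ < vv π (myI (lam + W) π) + W :=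
          Int.floor_lt.mpr (by push_cast; linarith)
        omega
      · exact Int.le_floor.mpr hb2
      · exact Int.floor_lt.mpr hb3
      · have h : vv π (myL (lam + W) π) - W ≤ ⌊lam + (W : ℝ)⌋ :=
          Int.le_floor.mpr (by push_cast; linarith)
        omega
    · intro π₁ h₁ π₂ h₂ hg
      simp only [Finset.coe_filter, Set.mem_setOf_eq] at h₁ h₂
      obtain ⟨hπ₁A, hπ₁F⟩ := h₁
      obtain ⟨hπ₂A, hπ₂F⟩ := h₂
      obtain ⟨hS1, hS2⟩ := hmainA π₁ hπ₁A
      obtain ⟨hT1, hT2⟩ := hmainA π₂ hπ₂A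
      obtain ⟨_, _, _, hinv₁, _⟩ := main_step n W hW lam hlam π₁ hS1 hS2
      obtain ⟨_, _, _, hinv₂, _⟩ := main_step n W hW lam hlam π₂ hT1 hT2
      have ha : (π₁ ^ myI (lam + W) π₁) (boxZero n) = (π₂ ^ myI (lam + W) π₂) (boxZero n) := by
        apply Subtype.ext
        exact congrArg Prod.fst hg
      have hb : (π₁ ^ myL (lam + W) π₁) (boxZero n) = (π₂ ^ myL (lam + W) π₂) (boxZero n) := by
        apply Subtype.ext
        exact congrArg Prod.snd hg
      rw [hinv₁, hinv₂, hπ₁F, hπ₂F, ha, hb]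
  -- the counting inequality
  have hcard : A.card ≤ W ^ 2 * B.card := by
    calc A.card ≤ W ^ 2 * (A.image (myF (lam + W))).card :=
          Finset.card_le_mul_card_image A (W ^ 2) hfiber
      _ ≤ W ^ 2 * B.card := Nat.mul_le_mul_left _ (Finset.card_le_card himage)
  -- conclude
  simp only [unifProb]
  have hDpos : (0 : ℝ) <
      ((Finset.univ.filter fun π : Equiv.Perm (Box n) => π ∈ SW n W).card : ℝ) := by
    exact_mod_cast hD
  have hle : ((Finset.univ.filter fun π : Equiv.Perm (Box n) => π ∈ SW n W ∧ π ∈ EA).card : ℝ)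
      ≤ (W : ℝ) ^ 2 *
        ((Finset.univ.filter fun π : Equiv.Perm (Box n) => π ∈ SW n W ∧ π ∈ EB).card : ℝ) := by
    rw [← hA, ← hB]
    exact_mod_cast hcard
  rw [one_mul, ← mul_div_assoc]
  refine (div_le_div_iff_of_pos_right hDpos).mpr ?_
  convert hle using 9 <;> rfl
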